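/- Let S be a finite state set and let 𝒯, 𝒯̂ : S × S → [0,1] be two transition systems (Markov kernels) on S. Fix a start state s ∈ S, a horizon n ≥ 1, and a set G ⊆ S of safe states, and let μ_{s⊨φ} and μ̂_{s⊨φ} be the probabilities, under the Markov measures on length-n traces of 𝒯 and of 𝒯̂ respectively started at s, that every state of the trace lies in G. Let ε > 0 and δ > 0, and suppose D_TV(𝒯(·∣s̄), 𝒯̂(·∣s̄)) ≤ α for every s̄ ∈ S, with α ≤ ε/(2n). If X₁, …, X_m are i.i.d. {0,1}-valued random variables, each being the indicator that an independently sampled length-n trace of 𝒯̂ started at s has all its states in G (so each X_j is Bernoulli with mean μ̂_{s⊨φ}), and m ≥ (2/ε²)·log(2/δ), then with probability at least 1 − δ the empirical mean satisfies |(1/m)·Σ_{j=1}^m X_j − μ_{s⊨φ}| ≤ ε; that is, sampling m traces from the approximate model yields an ε-approximate estimate of the bounded-safety probability under the true model. -/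

import Mathlib

open MeasureTheory ProbabilityTheory

open Classical in
noncomputable def safeProb {S : Type*} [Fintype S] (T : S → S → ℝ)
    (s : S) (n : ℕ) (G : Set S) : ℝ :=
  ∑ τ : Fin (n + 1) → S,
    if τ 0 = s ∧ ∀ i, τ i ∈ G then ∏ i : Fin n, T (τ i.castSucc) (τ i.succ) else 0

/-- Total variation distance between two distributions on a finite set. -/
noncomputable def tvDist {S : Type*} [Fintype S] (p q : S → ℝ) : ℝ :=
  (1 / 2) * ∑ s, |p s - q s|

open Classical in
lemma safeProb_zero {S : Type*} [Fintype S] (T : S → S → ℝ) (s : S) (G : Set S) :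
    safeProb T s 0 G = if s ∈ G then 1 else 0 := by
  classical
  rw [safeProb]
  rw [Fintype.sum_equiv (Equiv.funUnique (Fin 1) S) _
    (fun x => if x = s ∧ s ∈ G then 1 else 0)]
  · by_cases hG : s ∈ G <;> simp [hG]
  · intro τ
    simp only [Equiv.funUnique_apply, Finset.univ_eq_empty, Finset.prod_empty]
    refine if_congr ?_ rfl rfl
    constructor
    · rintro ⟨h1, h2⟩; exact ⟨h1, h1 ▸ h2 0⟩
    · rintro ⟨h1, h2⟩
      exact ⟨h1, fun i => by
        rw [Subsingleton.elim (α := Fin 1) i 0]; rw [show τ 0 = s from h1]; exact h2⟩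

open Classical in
lemma safeProb_succ {S : Type*} [Fintype S] (T : S → S → ℝ) (s : S) (n : ℕ) (G : Set S) :
    safeProb T s (n + 1) G =
      if s ∈ G then ∑ s', T s s' * safeProb T s' n G else 0 := by
  classical
  rw [safeProb]
  rw [← Equiv.sum_comp (Fin.consEquiv (fun _ : Fin (n+2) => S))]
  rw [Fintype.sum_prod_type]
  have key : ∀ x : S, ∀ σ : Fin (n+1) → S,
      ((fun τ : Fin (n+2) → S =>
        if τ 0 = s ∧ (∀ i, τ i ∈ G)
        then ∏ i : Fin (n+1), T (τ i.castSucc) (τ i.succ) else 0)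
        ((Fin.consEquiv (fun _ : Fin (n+2) => S)) (x, σ)))
      = if x = s then (if s ∈ G then
          T s (σ 0) * (if (∀ i, σ i ∈ G) then
            ∏ i : Fin n, T (σ i.castSucc) (σ i.succ) else 0) else 0) else 0 := by
    intro x σ
    simp only [Fin.consEquiv_apply]
    by_cases hx : x = s
    · subst hx
      rw [if_pos rfl]
      by_cases hG : x ∈ G
      · have hcond : ((Fin.cons x σ : Fin (n+2) → S) 0 = x ∧
            ∀ i, (Fin.cons x σ : Fin (n+2) → S) i ∈ G) ↔ (∀ i, σ i ∈ G) := by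
          rw [Fin.forall_fin_succ]
          simp [Fin.cons_zero, Fin.cons_succ, hG]
        rw [if_pos hG]
        by_cases hσ : ∀ i, σ i ∈ G
        · rw [if_pos (hcond.mpr hσ), if_pos hσ]
          rw [Fin.prod_univ_succ]
          simp only [Fin.cons_zero, Fin.cons_succ, Fin.castSucc_zero]
          congr 1
        · rw [if_neg (fun h => hσ (hcond.mp h)), if_neg hσ, mul_zero]
      · rw [if_neg (fun h => hG (h.2 0)), if_neg hG]
    · rw [if_neg (fun h => hx (by simpa using h.1)), if_neg hx]
  rw [Finset.sum_congr rfl fun x _ => Finset.sum_congr rfl fun σ _ => key x σ]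
  have step1 : ∀ x : S, (∑ σ : Fin (n+1) → S,
      if x = s then (if s ∈ G then T s (σ 0) * (if (∀ i, σ i ∈ G) then
        ∏ i : Fin n, T (σ i.castSucc) (σ i.succ) else 0) else 0) else 0)
      = if x = s then (if s ∈ G then ∑ σ : Fin (n+1) → S,
          T s (σ 0) * (if (∀ i, σ i ∈ G) then
            ∏ i : Fin n, T (σ i.castSucc) (σ i.succ) else 0) else 0) else 0 := by
    intro x
    split
    · split
      · rfl
      · simp
    · simp
  rw [Finset.sum_congr rfl fun x _ => step1 x]
  rw [Finset.sum_ite_eq' Finset.univ s]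
  simp only [Finset.mem_univ, if_true]
  refine if_congr Iff.rfl ?_ rfl
  simp only [safeProb]
  rw [Finset.sum_congr rfl (fun s' _ => Finset.mul_sum Finset.univ _ (T s s'))]
  rw [Finset.sum_comm]
  refine Finset.sum_congr rfl fun σ _ => ?_
  have hs := Finset.sum_eq_single (s := Finset.univ)
    (f := fun s' => T s s' * (if σ 0 = s' ∧ (∀ i, σ i ∈ G) then
      ∏ i : Fin n, T (σ i.castSucc) (σ i.succ) else 0)) (σ 0)
    (by intro b _ hb
        rw [if_neg (fun h => hb h.1.symm), mul_zero])
    (by intro h; exact absurd (Finset.mem_univ _) h)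
  rw [hs]
  by_cases hσ : ∀ i, σ i ∈ G <;> simp [hσ]

section
variable {S : Type*} [Fintype S]

lemma tv_pair (p q f : S → ℝ) (hp : ∑ x, p x = 1) (hq : ∑ x, q x = 1)
    (hf0 : ∀ x, 0 ≤ f x) (hf1 : ∀ x, f x ≤ 1) :
    |∑ x, (p x - q x) * f x| ≤ (1 / 2) * ∑ x, |p x - q x| := by
  have key : ∑ x, (p x - q x) * f x = ∑ x, (p x - q x) * (f x - 1/2) := by
    rw [show (∑ x, (p x - q x) * (f x - 1/2)) =
      ∑ x, ((p x - q x) * f x - (p x - q x) * (1/2)) from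
        Finset.sum_congr rfl fun x _ => by ring]
    rw [Finset.sum_sub_distrib, ← Finset.sum_mul, Finset.sum_sub_distrib, hp, hq]
    ring
  rw [key]
  calc |∑ x, (p x - q x) * (f x - 1/2)| ≤ ∑ x, |(p x - q x) * (f x - 1/2)| :=
        Finset.abs_sum_le_sum_abs _ _
    _ ≤ ∑ x, |p x - q x| * (1/2) := by
        refine Finset.sum_le_sum fun x _ => ?_
        rw [abs_mul]
        refine mul_le_mul_of_nonneg_left ?_ (abs_nonneg _)
        rw [abs_le]
        constructor <;> linarith [hf0 x, hf1 x]
    _ = (1/2) * ∑ x, |p x - q x| := by rw [← Finset.sum_mul]; ring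

lemma safeProb_nonneg (T : S → S → ℝ) (hT0 : ∀ s s', 0 ≤ T s s')
    (s : S) (n : ℕ) (G : Set S) : 0 ≤ safeProb T s n G := by
  classical
  refine Finset.sum_nonneg fun τ _ => ?_
  split
  · exact Finset.prod_nonneg fun i _ => hT0 _ _
  · exact le_rfl

lemma safeProb_le_one (T : S → S → ℝ) (hT0 : ∀ s s', 0 ≤ T s s')
    (hT1 : ∀ s, ∑ s', T s s' = 1) (s : S) (n : ℕ) (G : Set S) :
    safeProb T s n G ≤ 1 := by
  induction n generalizing s with
  | zero => rw [safeProb_zero]; split <;> norm_num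
  | succ k ih =>
    rw [safeProb_succ]
    split
    · calc ∑ s', T s s' * safeProb T s' k G ≤ ∑ s', T s s' * 1 :=
          Finset.sum_le_sum fun s' _ =>
            mul_le_mul_of_nonneg_left (ih s') (hT0 s s')
        _ = 1 := by simp [hT1 s]
    · norm_num

lemma safeProb_tv (T That : S → S → ℝ)
    (hT0 : ∀ s s', 0 ≤ T s s') (hT1 : ∀ s, ∑ s', T s s' = 1)
    (hThat0 : ∀ s s', 0 ≤ That s s') (hThat1 : ∀ s, ∑ s', That s s' = 1)
    (α : ℝ) (htv : ∀ sb, tvDist (T sb) (That sb) ≤ α)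
    (s : S) (n : ℕ) (G : Set S) :
    |safeProb T s n G - safeProb That s n G| ≤ n * α := by
  have hα : 0 ≤ α := by
    refine le_trans ?_ (htv s)
    unfold tvDist
    positivity
  induction n generalizing s with
  | zero => rw [safeProb_zero, safeProb_zero]; simp
  | succ k ih =>
    rw [safeProb_succ, safeProb_succ]
    split
    · have decomp : (∑ s', T s s' * safeProb T s' k G) -
          (∑ s', That s s' * safeProb That s' k G)
          = (∑ s', (T s s' - That s s') * safeProb That s' k G)
            + (∑ s', T s s' * (safeProb T s' k G - safeProb That s' k G)) := by
        rw [← Finset.sum_sub_distrib, ← Finset.sum_add_distrib]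
        refine Finset.sum_congr rfl fun s' _ => by ring
      rw [decomp]
      have h1 : |∑ s', (T s s' - That s s') * safeProb That s' k G| ≤ α := by
        refine le_trans (tv_pair _ _ _ (hT1 s) (hThat1 s)
          (fun x => safeProb_nonneg That hThat0 x k G)
          (fun x => safeProb_le_one That hThat0 hThat1 x k G)) ?_
        exact htv s
      have h2 : |∑ s', T s s' * (safeProb T s' k G - safeProb That s' k G)| ≤ k * α := by
        calc |∑ s', T s s' * (safeProb T s' k G - safeProb That s' k G)|
            ≤ ∑ s', |T s s' * (safeProb T s' k G - safeProb That s' k G)| :=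
              Finset.abs_sum_le_sum_abs _ _
          _ ≤ ∑ s', T s s' * (k * α) := by
              refine Finset.sum_le_sum fun s' _ => ?_
              rw [abs_mul, abs_of_nonneg (hT0 s s')]
              exact mul_le_mul_of_nonneg_left (ih s') (hT0 s s')
          _ = k * α := by rw [← Finset.sum_mul, hT1 s, one_mul]
      calc |(∑ s', (T s s' - That s s') * safeProb That s' k G)
            + (∑ s', T s s' * (safeProb T s' k G - safeProb That s' k G))|
          ≤ _ + _ := abs_add_le _ _
        _ ≤ α + k * α := add_le_add h1 h2
        _ = ((k:ℝ) + 1) * α := by ring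
        _ = ((k + 1 : ℕ) : ℝ) * α := by push_cast; ring
    · simp only [sub_self, abs_zero]
      positivity
end

lemma bern_mgf_bound (p t : ℝ) (hp0 : 0 ≤ p) (hp1 : p ≤ 1) :
    (1 - p) * Real.exp (-(t * p)) + p * Real.exp (t * (1 - p)) ≤ Real.exp (t ^ 2 / 8) := by
  set q : ℝ := 1 - p with hq
  have hq0 : 0 ≤ q := by simp [hq]; linarith
  clear_value q
  have hD : ∀ x : ℝ, 0 < q + p * Real.exp x := by
    intro x
    rcases eq_or_lt_of_le hp0 with h | h
    · simp [← h, hq]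
    · have := Real.exp_pos x
      nlinarith
  -- the function g
  set g : ℝ → ℝ := fun x => x ^ 2 / 8 + x * p - Real.log (q + p * Real.exp x) with hgdef
  set g1 : ℝ → ℝ := fun x => x / 4 + p - p * Real.exp x / (q + p * Real.exp x) with hg1def
  have hg' : ∀ x, HasDerivAt g (g1 x) x := by
    intro x
    have h1 : HasDerivAt (fun x : ℝ => x ^ 2 / 8 + x * p) (x / 4 + p) x := by
      have := ((hasDerivAt_pow 2 x).div_const 8).add ((hasDerivAt_id x).mul_const p)
      refine this.congr_deriv ?_
      simp
      ring
    have h2 : HasDerivAt (fun x : ℝ => Real.log (q + p * Real.exp x))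
        (p * Real.exp x / (q + p * Real.exp x)) x :=
      (((Real.hasDerivAt_exp x).const_mul p).const_add q).log (hD x).ne'
    exact h1.sub h2
  have hg1' : ∀ x, HasDerivAt g1 (1 / 4 - p * q * Real.exp x / (q + p * Real.exp x) ^ 2) x := by
    intro x
    have hnum : HasDerivAt (fun x : ℝ => p * Real.exp x) (p * Real.exp x) x :=
      (Real.hasDerivAt_exp x).const_mul p
    have hden : HasDerivAt (fun x : ℝ => q + p * Real.exp x) (p * Real.exp x) x :=
      hnum.const_add q
    have hdiv := hnum.div hden (hD x).ne'
    have h1 : HasDerivAt (fun x : ℝ => x / 4 + p) (1 / 4) x := by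
      simpa using (hasDerivAt_id x).div_const 4 |>.add_const p
    have := h1.sub hdiv
    refine this.congr_deriv ?_
    have hDx := (hD x).ne'
    field_simp
    ring
  have hg1nonneg : ∀ x, 0 ≤ 1 / 4 - p * q * Real.exp x / (q + p * Real.exp x) ^ 2 := by
    intro x
    rw [sub_nonneg, div_le_iff₀ (pow_pos (hD x) 2)]
    have h := sq_nonneg (q - p * Real.exp x)
    have expand : 1/4*(q + p*Real.exp x)^2 - p*q*Real.exp x = 1/4*(q - p*Real.exp x)^2 := by
      ring
    linarith
  have hg1mono : Monotone g1 :=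
    monotone_of_deriv_nonneg (fun x => (hg1' x).differentiableAt)
      (fun x => by rw [(hg1' x).deriv]; exact hg1nonneg x)
  have hg1zero : g1 0 = 0 := by
    have : q + p = 1 := by simp [hq]
    simp [hg1def, Real.exp_zero, this]
  have hgdiff : Differentiable ℝ g := fun x => (hg' x).differentiableAt
  have hgzero : g 0 = 0 := by
    have : q + p = 1 := by simp [hq]
    simp [hgdef, Real.exp_zero, this]
  have hgnonneg : ∀ x, 0 ≤ g x := by
    intro x
    rcases le_total 0 x with hx | hx
    · have hmono : MonotoneOn g (Set.Ici 0) := by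
        refine monotoneOn_of_deriv_nonneg (convex_Ici 0) hgdiff.continuous.continuousOn
          (hgdiff.differentiableOn) ?_
        intro y hy
        rw [(hg' y).deriv]
        rw [interior_Ici] at hy
        have := hg1mono (le_of_lt hy)
        rw [hg1zero] at this
        exact this
      have := hmono (Set.mem_Ici.mpr le_rfl) (Set.mem_Ici.mpr hx) hx
      rwa [hgzero] at this
    · have hanti : AntitoneOn g (Set.Iic 0) := by
        refine antitoneOn_of_deriv_nonpos (convex_Iic 0) hgdiff.continuous.continuousOn
          (hgdiff.differentiableOn) ?_
        intro y hy
        rw [(hg' y).deriv]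
        rw [interior_Iic] at hy
        have := hg1mono (le_of_lt hy)
        rw [hg1zero] at this
        exact this
      have := hanti (Set.mem_Iic.mpr hx) (Set.mem_Iic.mpr le_rfl) hx
      rwa [hgzero] at this
  -- conclude
  have hlog : Real.log (q + p * Real.exp t) ≤ t ^ 2 / 8 + t * p := by
    have := hgnonneg t
    simp only [hgdef, sub_nonneg] at this
    linarith
  have hDt := hD t
  have : q + p * Real.exp t ≤ Real.exp (t ^ 2 / 8 + t * p) := by
    calc q + p * Real.exp t = Real.exp (Real.log (q + p * Real.exp t)) :=
          (Real.exp_log hDt).symm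
      _ ≤ Real.exp (t ^ 2 / 8 + t * p) := Real.exp_le_exp.mpr hlog
  calc q * Real.exp (-(t * p)) + p * Real.exp (t * q)
      = Real.exp (-(t * p)) * (q + p * Real.exp t) := by
        rw [show t * q = -(t*p) + t by rw [hq]; ring, Real.exp_add]
        ring
    _ ≤ Real.exp (-(t * p)) * Real.exp (t ^ 2 / 8 + t * p) := by
        exact mul_le_mul_of_nonneg_left this (Real.exp_pos _).le
    _ = Real.exp (t ^ 2 / 8) := by rw [← Real.exp_add]; ring_nf

section
variable {Ω : Type*} [MeasurableSpace Ω] (P : Measure Ω) [IsProbabilityMeasure P]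

lemma bern_mgf_eq (X : Ω → ℝ) (hX : Measurable X) (p : ℝ) (hp0 : 0 ≤ p)
    (h01 : ∀ ω, X ω = 0 ∨ X ω = 1)
    (hmean : P {ω | X ω = 1} = ENNReal.ofReal p) (t : ℝ) :
    mgf X P t = 1 + (Real.exp t - 1) * p := by
  have hAmeas : MeasurableSet {ω | X ω = 1} := hX (measurableSet_singleton 1)
  have hPA : (P {ω | X ω = 1}).toReal = p := by rw [hmean, ENNReal.toReal_ofReal hp0]
  have hpt : (fun ω => Real.exp (t * X ω)) =
      fun ω => (Real.exp t - 1) * Set.indicator {ω | X ω = 1} (fun _ => (1:ℝ)) ω + 1 := by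
    funext ω
    rcases h01 ω with h | h
    · rw [Set.indicator_of_notMem (by simp [h] : ω ∉ {ω | X ω = 1})]
      simp [h]
    · rw [Set.indicator_of_mem (by simp [h] : ω ∈ {ω | X ω = 1})]
      simp [h]
  have hind : Integrable (Set.indicator {ω | X ω = 1} (fun _ => (1:ℝ))) P :=
    (integrable_const (1:ℝ)).indicator hAmeas
  unfold mgf
  rw [hpt]
  rw [integral_add ((hind.const_mul _)) (integrable_const 1)]
  rw [integral_const_mul, integral_indicator_const (1:ℝ) hAmeas, integral_const]
  simp [hPA]
  rw [measureReal_def, hPA]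
  ring

end


section
variable {Ω : Type*} [MeasurableSpace Ω] (P : Measure Ω) [IsProbabilityMeasure P]

lemma exp_shift_integrable (X : Ω → ℝ) (hX : Measurable X)
    (h01 : ∀ ω, X ω = 0 ∨ X ω = 1) (p : ℝ) (hp0 : 0 ≤ p) (hp1 : p ≤ 1) (t : ℝ) :
    Integrable (fun ω => Real.exp (t * (X ω - p))) P := by
  refine ⟨(((hX.sub measurable_const).const_mul t).exp).aestronglyMeasurable, ?_⟩
  refine HasFiniteIntegral.of_bounded (C := Real.exp |t|) (ae_of_all _ fun ω => ?_)
  rw [Real.norm_eq_abs, abs_of_pos (Real.exp_pos _)]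
  refine Real.exp_le_exp.mpr ?_
  have hb : |X ω - p| ≤ 1 := by
    rcases h01 ω with h | h <;> rw [h, abs_le] <;> constructor <;> linarith
  calc t * (X ω - p) ≤ |t * (X ω - p)| := le_abs_self _
    _ = |t| * |X ω - p| := abs_mul _ _
    _ ≤ |t| * 1 := mul_le_mul_of_nonneg_left hb (abs_nonneg t)
    _ = |t| := mul_one _

lemma centered_mgf_le (X : Ω → ℝ) (hX : Measurable X) (p : ℝ) (hp0 : 0 ≤ p) (hp1 : p ≤ 1)
    (h01 : ∀ ω, X ω = 0 ∨ X ω = 1)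
    (hmean : P {ω | X ω = 1} = ENNReal.ofReal p) (t : ℝ) :
    mgf (fun ω => X ω - p) P t ≤ Real.exp (t ^ 2 / 8) := by
  have hshift : mgf (fun ω => X ω - p) P t = Real.exp (-(t * p)) * mgf X P t := by
    unfold mgf
    rw [show (fun ω => Real.exp (t * (fun ω => X ω - p) ω)) =
        fun ω => Real.exp (-(t * p)) * Real.exp (t * X ω) by
      funext ω; rw [← Real.exp_add]; ring_nf]
    rw [integral_const_mul]
  rw [hshift, bern_mgf_eq P X hX p hp0 h01 hmean t]
  calc Real.exp (-(t * p)) * (1 + (Real.exp t - 1) * p)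
      = (1 - p) * Real.exp (-(t * p)) + p * Real.exp (t * (1 - p)) := by
        rw [show t * (1 - p) = -(t * p) + t by ring, Real.exp_add]
        ring
    _ ≤ _ := bern_mgf_bound p t hp0 hp1

end


/-- If the approximate transition system is everywhere within total
variation `α ≤ ε/(2n)` of the true one, then sampling `m ≥ (2/ε²)·log(2/δ)` i.i.d.
Bernoulli indicators of bounded safety of traces of the *approximate* system yields,
with probability at least `1 - δ`, an `ε`-approximate estimate of the bounded-safety
probability under the *true* system. -/
theorem ambs_hoeffding_approximate_model {S : Type*} [Fintype S] (T That : S → S → ℝ)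
    (hT0 : ∀ s s', 0 ≤ T s s') (hT1 : ∀ s, ∑ s', T s s' = 1)
    (hThat0 : ∀ s s', 0 ≤ That s s') (hThat1 : ∀ s, ∑ s', That s s' = 1)
    (s : S) (n : ℕ) (hn : 1 ≤ n) (G : Set S)
    (ε δ α : ℝ) (hε : 0 < ε) (hδ : 0 < δ)
    (htv : ∀ sb, tvDist (T sb) (That sb) ≤ α)
    (hα : α ≤ ε / (2 * n))
    {Ω : Type*} [MeasurableSpace Ω] (P : Measure Ω) [IsProbabilityMeasure P]
    (m : ℕ) (X : Fin m → Ω → ℝ)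
    (hmeas : ∀ j, Measurable (X j))
    (hindep : iIndepFun X P)
    (h01 : ∀ j ω, X j ω = 0 ∨ X j ω = 1)
    (hmean : ∀ j, P {ω | X j ω = 1} = ENNReal.ofReal (safeProb That s n G))
    (hm : 2 / ε ^ 2 * Real.log (2 / δ) ≤ (m : ℝ)) :
    ENNReal.ofReal (1 - δ) ≤
      P {ω | |(1 / (m : ℝ)) * ∑ j, X j ω - safeProb T s n G| ≤ ε} := by
  classical
  by_cases hδ1 : 1 ≤ δ
  · calc ENNReal.ofReal (1 - δ) = 0 := by rw [ENNReal.ofReal_eq_zero]; linarith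
      _ ≤ _ := zero_le
  push_neg at hδ1
  set phat := safeProb That s n G with hphat
  set pT := safeProb T s n G with hpTdef
  have hp0 : 0 ≤ phat := safeProb_nonneg That hThat0 s n G
  have hp1 : phat ≤ 1 := safeProb_le_one That hThat0 hThat1 s n G
  have hn0 : (0:ℝ) < n := by exact_mod_cast Nat.lt_of_lt_of_le Nat.zero_lt_one hn
  have hclose : |pT - phat| ≤ ε / 2 := by
    refine le_trans (safeProb_tv T That hT0 hT1 hThat0 hThat1 α htv s n G) ?_
    calc (n:ℝ) * α ≤ (n:ℝ) * (ε / (2 * n)) := mul_le_mul_of_nonneg_left hα (le_of_lt hn0)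
      _ = ε / 2 := by field_simp
  have hlog : 0 < Real.log (2 / δ) := Real.log_pos (by rw [lt_div_iff₀ hδ]; linarith)
  have hmpos : (0:ℝ) < m := by
    refine lt_of_lt_of_le ?_ hm
    positivity
  -- centered variables
  set Y : Fin m → Ω → ℝ := fun j ω => X j ω - phat with hY
  have hYmeas : ∀ j, Measurable (Y j) := fun j => (hmeas j).sub measurable_const
  have hYindep : iIndepFun Y P :=
    hindep.comp (fun _ x => x - phat) (fun _ => measurable_id.sub measurable_const)
  have hYint : ∀ (t : ℝ) (j : Fin m), Integrable (fun ω => Real.exp (t * Y j ω)) P :=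
    fun t j => exp_shift_integrable P (X j) (hmeas j) (h01 j) phat hp0 hp1 t
  have hmgfY : ∀ t : ℝ, mgf (∑ j, Y j) P t ≤ Real.exp ((m:ℝ) * (t^2/8)) := by
    intro t
    rw [hYindep.mgf_sum hYmeas Finset.univ]
    calc ∏ j, mgf (Y j) P t ≤ ∏ _j : Fin m, Real.exp (t^2/8) := by
          refine Finset.prod_le_prod (fun j _ => mgf_nonneg) (fun j _ => ?_)
          exact centered_mgf_le P (X j) (hmeas j) phat hp0 hp1 (h01 j) (hmean j) t
      _ = Real.exp (t^2/8) ^ m := by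
          rw [Finset.prod_const, Finset.card_univ, Fintype.card_fin]
      _ = Real.exp ((m:ℝ) * (t^2/8)) := by rw [← Real.exp_nat_mul]
  have hsum_int : ∀ t : ℝ, Integrable (fun ω => Real.exp (t * (∑ j, Y j) ω)) P :=
    fun t => hYindep.integrable_exp_mul_sum hYmeas (fun j _ => hYint t j)
  set a : ℝ := (m:ℝ) * ε / 2 with ha
  have hup : (P {ω | a ≤ (∑ j, Y j) ω}).toReal ≤ Real.exp (-(m:ℝ)*ε^2/2) := by
    calc (P {ω | a ≤ (∑ j, Y j) ω}).toReal
        ≤ Real.exp (-(2*ε) * a) * mgf (∑ j, Y j) P (2*ε) :=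
          measure_ge_le_exp_mul_mgf a (by positivity) (hsum_int (2*ε))
      _ ≤ Real.exp (-(2*ε) * a) * Real.exp ((m:ℝ) * ((2*ε)^2/8)) :=
          mul_le_mul_of_nonneg_left (hmgfY (2*ε)) (Real.exp_pos _).le
      _ = Real.exp (-(m:ℝ)*ε^2/2) := by rw [← Real.exp_add]; congr 1; rw [ha]; ring
  have hlo : (P {ω | (∑ j, Y j) ω ≤ -a}).toReal ≤ Real.exp (-(m:ℝ)*ε^2/2) := by
    calc (P {ω | (∑ j, Y j) ω ≤ -a}).toReal
        ≤ Real.exp (-(-(2*ε)) * (-a)) * mgf (∑ j, Y j) P (-(2*ε)) :=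
          measure_le_le_exp_mul_mgf (-a) (by linarith) (hsum_int (-(2*ε)))
      _ ≤ Real.exp (-(-(2*ε)) * (-a)) * Real.exp ((m:ℝ) * ((-(2*ε))^2/8)) :=
          mul_le_mul_of_nonneg_left (hmgfY _) (Real.exp_pos _).le
      _ = Real.exp (-(m:ℝ)*ε^2/2) := by rw [← Real.exp_add]; congr 1; rw [ha]; ring
  have hexp : Real.exp (-(m:ℝ)*ε^2/2) ≤ δ/2 := by
    have h1 : Real.log (2/δ) ≤ (m:ℝ) * ε^2/2 := by
      have h2 : 2 / ε ^ 2 * Real.log (2 / δ) ≤ (m:ℝ) := hm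
      have hε2 : (0:ℝ) < ε^2 := by positivity
      rw [div_mul_eq_mul_div, div_le_iff₀ hε2] at h2
      linarith
    calc Real.exp (-(m:ℝ)*ε^2/2) ≤ Real.exp (-(Real.log (2/δ))) := by
          refine Real.exp_le_exp.mpr ?_
          linarith
      _ = (2/δ)⁻¹ := by rw [Real.exp_neg, Real.exp_log (by positivity)]
      _ = δ/2 := by rw [inv_div]
  set E := {ω | |(1 / (m : ℝ)) * ∑ j, X j ω - pT| ≤ ε} with hE
  have hEmeas : MeasurableSet E := by
    have hf : Measurable fun ω => |1/(m:ℝ) * ∑ j, X j ω - pT| :=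
      ((measurable_const.mul (Finset.measurable_sum Finset.univ fun j _ => hmeas j)).sub
        measurable_const).abs
    exact measurableSet_le hf measurable_const
  have hsub : Eᶜ ⊆ {ω | a ≤ (∑ j, Y j) ω} ∪ {ω | (∑ j, Y j) ω ≤ -a} := by
    intro ω hω
    simp only [hE, Set.mem_compl_iff, Set.mem_setOf_eq, not_le] at hω
    have hYω : (∑ j, Y j) ω = (∑ j, X j ω) - (m:ℝ) * phat := by
      rw [Finset.sum_apply]
      simp only [hY]
      rw [Finset.sum_sub_distrib, Finset.sum_const, Finset.card_univ, Fintype.card_fin,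
        nsmul_eq_mul]
    have ht1 : |1/(m:ℝ) * ∑ j, X j ω - pT| ≤
        |1/(m:ℝ) * ∑ j, X j ω - phat| + |phat - pT| := abs_sub_le _ _ _
    have ht2 : |phat - pT| = |pT - phat| := abs_sub_comm _ _
    have h3 : ε/2 < |1/(m:ℝ) * ∑ j, X j ω - phat| := by
      rw [ht2] at ht1
      linarith
    have h4 : (∑ j, Y j) ω = (m:ℝ) * (1/(m:ℝ) * ∑ j, X j ω - phat) := by
      rw [hYω]
      field_simp
    have h5 : a < |(∑ j, Y j) ω| := by
      rw [h4, abs_mul, abs_of_pos hmpos, ha]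
      calc (m:ℝ) * ε / 2 = (m:ℝ) * (ε/2) := by ring
        _ < _ := mul_lt_mul_of_pos_left h3 hmpos
    rcases lt_abs.mp h5 with h | h
    · left; exact le_of_lt h
    · right
      simp only [Set.mem_setOf_eq]
      linarith
  have hcompl : (P Eᶜ).toReal ≤ δ := by
    have h1 : P Eᶜ ≤ P {ω | a ≤ (∑ j, Y j) ω} + P {ω | (∑ j, Y j) ω ≤ -a} :=
      le_trans (measure_mono hsub) (measure_union_le _ _)
    have h2 : (P Eᶜ).toReal ≤ (P {ω | a ≤ (∑ j, Y j) ω}).toReal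
        + (P {ω | (∑ j, Y j) ω ≤ -a}).toReal := by
      refine le_trans (ENNReal.toReal_mono ?_ h1) ?_
      · exact ENNReal.add_ne_top.mpr ⟨measure_ne_top _ _, measure_ne_top _ _⟩
      · rw [ENNReal.toReal_add (measure_ne_top _ _) (measure_ne_top _ _)]
    linarith
  have hsum1 : (P E).toReal + (P Eᶜ).toReal = 1 := by
    rw [← ENNReal.toReal_add (measure_ne_top _ _) (measure_ne_top _ _),
      prob_add_prob_compl hEmeas]
    simp
  have hfinal : 1 - δ ≤ (P E).toReal := by linarith
  calc ENNReal.ofReal (1 - δ) ≤ ENNReal.ofReal ((P E).toReal) :=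
        ENNReal.ofReal_le_ofReal hfinal
    _ = P E := ENNReal.ofReal_toReal (measure_ne_top _ _)
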